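/- Let n ≥ 1, let σ : Fin n → Fin n be any function, and let x : [0, ∞) → (Fin n → ℝ) be a differentiable function satisfying, for every i ∈ Fin n, x_i′(t) = (∑_{j : σ(j) = i} x_j(t)) − x_i(t), with all initial values x_i(0) rational. Then for every i ∈ Fin n the limit lim_{t→∞} x_i(t) exists and is a rational number. -/

import Mathlib

open Filter Complex

noncomputable def zet (L : ℕ) : ℂ := Complex.exp (2 * Real.pi * Complex.I / L)

lemma zet_pow_L (L : ℕ) (hL : 1 ≤ L) : zet L ^ L = 1 := by
  rw [zet, ← Complex.exp_nat_mul]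
  have hL0 : (L:ℂ) ≠ 0 := Nat.cast_ne_zero.2 (by omega)
  rw [mul_div_cancel₀ _ hL0, Complex.exp_two_pi_mul_I]

lemma zet_zpow_eq_one_iff (L : ℕ) (hL : 1 ≤ L) (m : ℤ) :
    zet L ^ m = 1 ↔ (L:ℤ) ∣ m := by
  have hL0 : (L:ℂ) ≠ 0 := Nat.cast_ne_zero.2 (by omega)
  rw [zet, ← Complex.exp_int_mul, Complex.exp_eq_one_iff]
  constructor
  · rintro ⟨k, hk⟩
    have hpi : (2 * Real.pi * Complex.I) ≠ 0 := by
      simp [Real.pi_ne_zero, Complex.I_ne_zero]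
    field_simp at hk
    have h2 : ((m : ℂ)) * (2 * Real.pi * Complex.I) = ((L:ℤ) * k : ℤ) * (2 * Real.pi * Complex.I) := by
      push_cast; rw [hk]
    have h3 : ((m : ℂ)) = (((L:ℤ) * k : ℤ) : ℂ) := mul_right_cancel₀ hpi h2
    exact ⟨k, by exact_mod_cast h3⟩
  · rintro ⟨k, rfl⟩
    exact ⟨k, by field_simp; push_cast; norm_cast⟩

lemma geom_zet (L : ℕ) (hL : 1 ≤ L) (m : ℤ) :
    ∑ s ∈ Finset.range L, (zet L ^ m) ^ s = if (L:ℤ) ∣ m then (L:ℂ) else 0 := by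
  by_cases h : (L:ℤ) ∣ m
  · rw [if_pos h, (zet_zpow_eq_one_iff L hL m).2 h]
    simp
  · rw [if_neg h]
    have hne : zet L ^ m ≠ 1 := fun hc => h ((zet_zpow_eq_one_iff L hL m).1 hc)
    rw [geom_sum_eq hne]
    have : (zet L ^ m) ^ L = 1 := by
      rw [← zpow_natCast (zet L ^ m), ← zpow_mul, mul_comm, zpow_mul, zpow_natCast,
        zet_pow_L L hL, one_zpow]
    rw [this]; simp

lemma periodic_mod {α : Type*} (L : ℕ) (hL : 1 ≤ L) (c : ℕ → α) (hc : ∀ k, c (k + L) = c k)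
    (k : ℕ) : c k = c (k % L) := by
  induction k using Nat.strong_induction_on with
  | _ k ih =>
    by_cases h : k < L
    · rw [Nat.mod_eq_of_lt h]
    · have hk : k = (k - L) + L := by omega
      calc c k = c ((k - L) + L) := by rw [← hk]
        _ = c (k - L) := hc _
        _ = c ((k - L) % L) := ih _ (by omega)
        _ = c (k % L) := by conv_rhs => rw [hk, Nat.add_mod_right]

noncomputable def gam (L : ℕ) (c : ℕ → ℂ) (s : ℕ) : ℂ :=
  (∑ r ∈ Finset.range L, c r * zet L ^ (-((s : ℤ) * r))) / L

lemma dft_inv (L : ℕ) (hL : 1 ≤ L) (c : ℕ → ℂ) (hc : ∀ k, c (k + L) = c k) (k : ℕ) :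
    ∑ s ∈ Finset.range L, gam L c s * zet L ^ (s * k) = c k := by
  have hζ : zet L ≠ 0 := Complex.exp_ne_zero _
  have hL0 : (L:ℂ) ≠ 0 := Nat.cast_ne_zero.2 (by omega)
  have key : ∀ s ∈ Finset.range L, gam L c s * zet L ^ (s * k)
      = ∑ r ∈ Finset.range L, (c r / L) * (zet L ^ ((k:ℤ) - r)) ^ s := by
    intro s _
    rw [gam, div_mul_eq_mul_div, Finset.sum_mul, Finset.sum_div]
    refine Finset.sum_congr rfl fun r _ => ?_
    rw [div_mul_eq_mul_div]
    congr 1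
    rw [mul_assoc]
    congr 1
    rw [← zpow_natCast (zet L) (s * k), ← zpow_add₀ hζ]
    have he : (-((s:ℤ) * r) + ((s * k : ℕ) : ℤ)) = ((k:ℤ) - r) * s := by push_cast; ring
    rw [he, zpow_mul, zpow_natCast]
  rw [Finset.sum_congr rfl key, Finset.sum_comm]
  have inner : ∀ r ∈ Finset.range L, ∑ s ∈ Finset.range L, (c r / L) * (zet L ^ ((k:ℤ) - r)) ^ s
      = (c r / L) * (if (L:ℤ) ∣ ((k:ℤ) - r) then (L:ℂ) else 0) := by
    intro r _
    rw [← Finset.mul_sum, geom_zet L hL]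
  rw [Finset.sum_congr rfl inner]
  have hmem : k % L ∈ Finset.range L := Finset.mem_range.2 (Nat.mod_lt _ (by omega))
  rw [Finset.sum_eq_single_of_mem (k % L) hmem]
  · have hdvd : (L:ℤ) ∣ ((k:ℤ) - (k % L : ℕ)) := by
      refine ⟨(k / L : ℕ), ?_⟩
      have h : (L : ℤ) * ((k / L : ℕ) : ℤ) + ((k % L : ℕ) : ℤ) = (k : ℤ) := by
        exact_mod_cast congrArg (Nat.cast : ℕ → ℤ) (Nat.div_add_mod k L)
      linarith
    rw [if_pos hdvd, div_mul_cancel₀ _ hL0, ← periodic_mod L hL c hc k]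
  · intro r hr hne
    have hr' := Finset.mem_range.1 hr
    have : ¬ (L:ℤ) ∣ ((k:ℤ) - r) := by
      intro ⟨q, hq⟩
      apply hne
      have hk' : (k:ℤ) = r + L * q := by omega
      have h1 : (k:ℤ) % L = (r:ℤ) % L := by rw [hk', Int.add_mul_emod_self_left]
      have h2 : (r:ℤ) % L = r := Int.emod_eq_of_lt (by positivity) (by exact_mod_cast hr')
      have h3 : (k:ℤ) % L = ((k % L : ℕ) : ℤ) := by push_cast; ring
      omega
    rw [if_neg this, mul_zero]

lemma zet_pow_re_lt (L : ℕ) (hL : 1 ≤ L) (s : ℕ) (hs : 0 < s) (hsL : s < L) :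
    (zet L ^ s).re < 1 := by
  have habs : ‖zet L ^ s‖ = 1 := by
    rw [norm_pow]
    have : (2 * Real.pi * Complex.I / (L:ℂ)) = ((2 * Real.pi / (L:ℝ) : ℝ) : ℂ) * Complex.I := by
      push_cast; ring
    rw [zet, this, Complex.norm_exp]
    simp
  have hne : zet L ^ s ≠ 1 := by
    rw [← zpow_natCast, Ne, zet_zpow_eq_one_iff L hL]
    intro ⟨q, hq⟩
    rcases Int.lt_or_lt_of_ne (a := q) (b := 0) (by rintro rfl; omega) with h | h
    · nlinarith [hq, (by exact_mod_cast hsL : (s:ℤ) < L), (by positivity : (0:ℤ) < (L:ℤ))]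
    · nlinarith [hq, (by exact_mod_cast hsL : (s:ℤ) < L), (by positivity : (0:ℤ) < (L:ℤ))]
  rcases lt_or_eq_of_le ((Complex.re_le_norm _).trans habs.le) with h | h
  · exact h
  · exfalso
    apply hne
    have h2 := Complex.sq_norm (zet L ^ s)
    rw [habs, Complex.normSq_apply] at h2
    have him : (zet L ^ s).im = 0 := by nlinarith
    exact Complex.ext (by rw [h]; rfl) (by rw [him]; rfl)

lemma poisson_periodic (L : ℕ) (hL : 1 ≤ L) (c : ℕ → ℂ) (hc : ∀ k, c (k + L) = c k) :
    Tendsto (fun t : ℝ => Complex.exp (-(t:ℂ)) * ∑' k, ((t:ℂ) ^ k / (k.factorial : ℂ)) * c k)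
      atTop (nhds ((∑ r ∈ Finset.range L, c r) / L)) := by
  have key : ∀ t : ℝ, Complex.exp (-(t:ℂ)) * ∑' k, ((t:ℂ) ^ k / (k.factorial : ℂ)) * c k
      = ∑ s ∈ Finset.range L, gam L c s * Complex.exp ((t:ℂ) * zet L ^ s - t) := by
    intro t
    have h1 : ∀ k : ℕ, ((t:ℂ) ^ k / (k.factorial : ℂ)) * c k
        = ∑ s ∈ Finset.range L, gam L c s * (((t:ℂ) * zet L ^ s) ^ k / (k.factorial : ℂ)) := by
      intro k
      rw [← dft_inv L hL c hc k, Finset.mul_sum]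
      refine Finset.sum_congr rfl fun s _ => ?_
      rw [mul_pow, pow_mul]
      field_simp
    rw [tsum_congr h1, Summable.tsum_finsetSum (fun s _ =>
      ((NormedSpace.expSeries_div_summable ((t:ℂ) * zet L ^ s)).mul_left (gam L c s)))]
    rw [Finset.mul_sum]
    refine Finset.sum_congr rfl fun s _ => ?_
    rw [tsum_mul_left]
    have h2 : ∑' k, (((t:ℂ) * zet L ^ s) ^ k / (k.factorial : ℂ)) =
        Complex.exp ((t:ℂ) * zet L ^ s) := by
      rw [Complex.exp_eq_exp_ℂ, NormedSpace.exp_eq_tsum_div]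
    rw [h2, show ((t:ℂ) * zet L ^ s - t) = ((t:ℂ) * zet L ^ s + (-(t:ℂ))) by ring,
      Complex.exp_add]
    ring
  rw [show ((∑ r ∈ Finset.range L, c r) / L : ℂ)
      = ∑ s ∈ Finset.range L, (if s = 0 then (∑ r ∈ Finset.range L, c r) / L else 0) by
    rw [Finset.sum_ite_eq' (Finset.range L) 0 (fun _ => (∑ r ∈ Finset.range L, c r) / L),
      if_pos (Finset.mem_range.2 (by omega))]]
  refine Tendsto.congr (fun t => (key t).symm) (tendsto_finset_sum _ fun s hs => ?_)
  rcases Nat.eq_zero_or_pos s with rfl | hs0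
  · simp only [if_pos rfl]
    have hg : gam L c 0 = (∑ r ∈ Finset.range L, c r) / L := by
      rw [gam]; congr 1; refine Finset.sum_congr rfl fun r _ => ?_; norm_num
    refine Tendsto.congr (fun t => ?_) tendsto_const_nhds
    rw [hg, pow_zero, mul_one, sub_self, Complex.exp_zero, mul_one, if_pos trivial]
  · rw [if_neg (by omega)]
    rw [show (0:ℂ) = gam L c s * 0 by ring]
    refine Tendsto.const_mul _ ?_
    rw [tendsto_zero_iff_norm_tendsto_zero]
    have hre := zet_pow_re_lt L hL s hs0 (Finset.mem_range.1 hs)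
    have hnorm : ∀ t : ℝ, ‖Complex.exp ((t:ℂ) * zet L ^ s - t)‖
        = Real.exp (t * ((zet L ^ s).re - 1)) := by
      intro t
      rw [Complex.norm_exp]
      congr 1
      simp [Complex.sub_re, Complex.re_ofReal_mul]
      ring
    rw [show (0:ℝ) = 0 from rfl]
    refine Tendsto.congr (fun t => (hnorm t).symm) ?_
    have hlim : Tendsto (fun t : ℝ => t * ((zet L ^ s).re - 1)) atTop atBot :=
      tendsto_id.atTop_mul_const_of_neg (by linarith)
    exact Real.tendsto_exp_atBot.comp hlim

lemma poisson_ev (L K : ℕ) (hL : 1 ≤ L) (c : ℕ → ℂ) (hc : ∀ k, K ≤ k → c (k + L) = c k) :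
    Tendsto (fun t : ℝ => Complex.exp (-(t:ℂ)) * ∑' k, ((t:ℂ) ^ k / (k.factorial : ℂ)) * c k)
      atTop (nhds ((∑ r ∈ Finset.range L, c (K * L + r)) / L)) := by
  set d : ℕ → ℂ := fun k => c (K * L + k % L) with hd_def
  have hKK : K ≤ K * L := Nat.le_mul_of_pos_right K (by omega)
  have hd_per : ∀ k, d (k + L) = d k := fun k => by simp [hd_def, Nat.add_mod_right]
  have hmod : ∀ m : ℕ, c (K * L + m) = c (K * L + m % L) := by
    intro m
    induction m using Nat.strong_induction_on with
    | _ m ih =>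
      by_cases h : m < L
      · rw [Nat.mod_eq_of_lt h]
      · have hm : K * L + m = (K * L + (m - L)) + L := by omega
        rw [hm, hc _ (by omega), ih (m - L) (by omega),
          Nat.mod_eq_sub_mod (by omega : L ≤ m)]
  have hagree : ∀ k, K * L ≤ k → c k = d k := by
    intro k hk
    have h1 : k = K * L + (k - K * L) := by omega
    rw [hd_def]
    conv_lhs => rw [h1]
    rw [hmod]
    congr 2
    conv_rhs => rw [h1]
    rw [Nat.add_comm (K*L), Nat.add_mul_mod_self_right]
  have hdnorm : ∀ k, ‖d k‖ ≤ ∑ r ∈ Finset.range L, ‖c (K * L + r)‖ := by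
    intro k
    have : k % L < L := Nat.mod_lt _ (by omega)
    exact Finset.single_le_sum (f := fun r => ‖c (K * L + r)‖) (fun r _ => norm_nonneg _)
      (Finset.mem_range.2 this)
  have hSd : ∀ t : ℝ, Summable fun k => ((t:ℂ) ^ k / (k.factorial : ℂ)) * d k := by
    intro t
    refine Summable.of_norm_bounded
      ((NormedSpace.norm_expSeries_div_summable ((t:ℂ))).mul_right
        (∑ r ∈ Finset.range L, ‖c (K * L + r)‖)) (fun k => ?_)
    rw [norm_mul]
    exact mul_le_mul_of_nonneg_left (hdnorm k) (norm_nonneg _)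
  have hSe : ∀ t : ℝ, Summable fun k => ((t:ℂ) ^ k / (k.factorial : ℂ)) * (c k - d k) := by
    intro t
    refine summable_of_ne_finset_zero (s := Finset.range (K * L)) (fun k hk => ?_)
    have hk' : K * L ≤ k := le_of_not_gt (fun h => hk (Finset.mem_range.2 h))
    simp only [hagree k hk', sub_self, mul_zero]
  have hsplit : ∀ t : ℝ, (∑' k, ((t:ℂ) ^ k / (k.factorial : ℂ)) * c k)
      = (∑' k, ((t:ℂ) ^ k / (k.factorial : ℂ)) * d k)
        + ∑ k ∈ Finset.range (K * L), ((t:ℂ) ^ k / (k.factorial : ℂ)) * (c k - d k) := by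
    intro t
    rw [← tsum_eq_sum (L := SummationFilter.unconditional ℕ) (f := fun k => ((t:ℂ) ^ k / (k.factorial : ℂ)) * (c k - d k))
      (fun k hk => by
        have hk' : K * L ≤ k := le_of_not_gt (fun h => hk (Finset.mem_range.2 h))
        simp only [hagree k hk', sub_self, mul_zero]),
      ← Summable.tsum_add (hSd t) (hSe t)]
    exact tsum_congr fun k => by ring
  have hmain := poisson_periodic L hL d hd_per
  have hdr : ∑ r ∈ Finset.range L, d r = ∑ r ∈ Finset.range L, c (K * L + r) :=
    Finset.sum_congr rfl fun r hr => by
      simp [hd_def, Nat.mod_eq_of_lt (Finset.mem_range.1 hr)]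
  rw [hdr] at hmain
  have hzero : Tendsto (fun t : ℝ => Complex.exp (-(t:ℂ)) *
      ∑ k ∈ Finset.range (K * L), ((t:ℂ) ^ k / (k.factorial : ℂ)) * (c k - d k)) atTop
      (nhds 0) := by
    have : ∀ t : ℝ, Complex.exp (-(t:ℂ)) *
        ∑ k ∈ Finset.range (K * L), ((t:ℂ) ^ k / (k.factorial : ℂ)) * (c k - d k)
        = ∑ k ∈ Finset.range (K * L),
            Complex.exp (-(t:ℂ)) * (((t:ℂ) ^ k / (k.factorial : ℂ)) * (c k - d k)) :=
      fun t => Finset.mul_sum _ _ _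
    refine Tendsto.congr (fun t => (this t).symm) ?_
    rw [show (0:ℂ) = ∑ k ∈ Finset.range (K * L), (0:ℂ) by simp]
    refine tendsto_finset_sum _ fun k _ => ?_
    apply squeeze_zero_norm' (a := fun t : ℝ =>
      (t ^ k * Real.exp (-t)) * (‖c k - d k‖ / k.factorial))
    · filter_upwards [eventually_ge_atTop (0:ℝ)] with t ht
      have e1 : ‖Complex.exp (-(t:ℂ))‖ = Real.exp (-t) := by
        rw [Complex.norm_exp]; simp
      have e2 : ‖((t:ℂ)) ^ k‖ = t ^ k := by
        rw [norm_pow, Complex.norm_real, Real.norm_eq_abs, _root_.abs_of_nonneg ht]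
      have e3 : ‖((k.factorial : ℕ) : ℂ)‖ = (k.factorial : ℝ) := by
        rw [Complex.norm_natCast]
      rw [norm_mul, norm_mul, norm_div, e1, e2, e3]
      exact le_of_eq (by ring)
    · rw [show (0:ℝ) = 0 * (‖c k - d k‖ / k.factorial) by ring]
      exact (Real.tendsto_pow_mul_exp_neg_atTop_nhds_zero k).mul_const _
  have := hmain.add hzero
  rw [add_zero] at this
  refine Tendsto.congr (fun t => ?_) this
  rw [hsplit t, mul_add]

lemma poisson_ev_real (L K : ℕ) (hL : 1 ≤ L) (c : ℕ → ℝ) (hc : ∀ k, K ≤ k → c (k + L) = c k) :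
    Tendsto (fun t : ℝ => Real.exp (-t) * ∑' k, (t ^ k / (k.factorial : ℝ)) * c k) atTop
      (nhds ((∑ r ∈ Finset.range L, c (K * L + r)) / L)) := by
  have h := poisson_ev L K hL (fun k => (c k : ℂ))
    (fun k hk => by exact_mod_cast congrArg (fun y : ℝ => (y : ℂ)) (hc k hk))
  rw [← Filter.tendsto_ofReal_iff]
  have heq : ∀ t : ℝ, ((Real.exp (-t) * ∑' k, (t ^ k / (k.factorial : ℝ)) * c k : ℝ) : ℂ)
      = Complex.exp (-(t:ℂ)) * ∑' k, ((t:ℂ) ^ k / (k.factorial : ℂ)) * (c k : ℂ) := by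
    intro t
    rw [Complex.ofReal_mul, Complex.ofReal_exp, Complex.ofReal_tsum]
    push_cast
    rfl
  refine Tendsto.congr (fun t => (heq t).symm) ?_
  convert h using 2
  push_cast
  rfl

section MatrixPart

open Matrix

attribute [local instance] Matrix.linftyOpNormedAddCommGroup Matrix.linftyOpNormedRing
  Matrix.linftyOpNormedAlgebra

variable {n : ℕ}

noncomputable def Pm (σ : Fin n → Fin n) : Matrix (Fin n) (Fin n) ℝ :=
  Matrix.of fun i j => if σ j = i then 1 else 0

lemma Pm_pow_apply (σ : Fin n → Fin n) (k : ℕ) (i j : Fin n) :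
    ((Pm σ) ^ k) i j = if σ^[k] j = i then 1 else 0 := by
  induction k generalizing j with
  | zero => simp [Matrix.one_apply, eq_comm]
  | succ k ih =>
    rw [pow_succ, Matrix.mul_apply]
    have : ∀ l, ((Pm σ) ^ k) i l * (Pm σ) l j
        = if σ j = l then ((Pm σ) ^ k) i l else 0 := by
      intro l
      simp only [Pm, Matrix.of_apply, mul_ite, mul_one, mul_zero]
    rw [Finset.sum_congr rfl fun l _ => this l, Finset.sum_ite_eq Finset.univ (σ j)
      (fun l => ((Pm σ) ^ k) i l), if_pos (Finset.mem_univ _), ih,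
      Function.iterate_succ_apply]

lemma M_mulVec (σ : Fin n → Fin n) (v : Fin n → ℝ) (i : Fin n) :
    ((Pm σ - 1).mulVec v) i = (∑ j ∈ Finset.univ.filter fun j => σ j = i, v j) - v i := by
  rw [Matrix.sub_mulVec, Pi.sub_apply, Matrix.one_mulVec]
  congr 1
  rw [Matrix.mulVec, dotProduct]
  rw [Finset.sum_filter]
  refine Finset.sum_congr rfl fun j _ => ?_
  simp only [Pm, Matrix.of_apply, ite_mul, one_mul, zero_mul]

lemma x_eq_exp (hn : 1 ≤ n) (σ : Fin n → Fin n) (x : ℝ → (Fin n → ℝ))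
    (hx : ∀ t : ℝ, 0 ≤ t → ∀ i : Fin n,
      HasDerivAt (fun t => x t i)
        ((∑ j ∈ Finset.univ.filter fun j => σ j = i, x t j) - x t i) t)
    (t : ℝ) (ht : 0 ≤ t) :
    x t = (NormedSpace.exp (t • (Pm σ - 1))).mulVec (x 0) := by
  set M : Matrix (Fin n) (Fin n) ℝ := Pm σ - 1 with hM
  -- the candidate solution
  set g : ℝ → (Fin n → ℝ) := fun t => (NormedSpace.exp (t • M)).mulVec (x 0) with hg
  -- x has vector-valued derivative M.mulVec (x t)
  have hx' : ∀ s : ℝ, 0 ≤ s → HasDerivAt x (M.mulVec (x s)) s := by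
    intro s hs
    refine hasDerivAt_pi.2 fun i => ?_
    have := hx s hs i
    rwa [show M.mulVec (x s) i = (∑ j ∈ Finset.univ.filter fun j => σ j = i, x s j) - x s i
      from M_mulVec σ (x s) i]
  -- g has the same derivative
  have hψ : ∀ (A B : Matrix (Fin n) (Fin n) ℝ) (c : ℝ), True := fun _ _ _ => trivial
  let ψ : Matrix (Fin n) (Fin n) ℝ →ₗ[ℝ] (Fin n → ℝ) :=
    { toFun := fun A => A.mulVec (x 0)
      map_add' := fun A B => Matrix.add_mulVec A B (x 0)
      map_smul' := fun c A => Matrix.smul_mulVec c A (x 0) }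
  let φ := LinearMap.toContinuousLinearMap ψ
  have hg' : ∀ s : ℝ, HasDerivAt g (M.mulVec (g s)) s := by
    intro s
    have hexp : HasDerivAt (fun u : ℝ => NormedSpace.exp (u • M))
        (NormedSpace.exp (s • M) * M) s := hasDerivAt_exp_smul_const M s
    have hcomp := φ.hasFDerivAt.comp_hasDerivAt s hexp
    have : φ (NormedSpace.exp (s • M) * M) = M.mulVec (g s) := by
      show (NormedSpace.exp (s • M) * M).mulVec (x 0) = M.mulVec (g s)
      rw [((Commute.refl M).smul_left s).exp_left]
      rw [← Matrix.mulVec_mulVec]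
    rw [← this]
    exact hcomp
  -- uniqueness
  let χ := LinearMap.toContinuousLinearMap (Matrix.mulVecLin M)
  have hv : ∀ s : ℝ, LipschitzWith ‖χ‖₊ (fun y : Fin n → ℝ => M.mulVec y) := fun s => χ.lipschitz
  have hcont : ContinuousOn x (Set.Icc 0 t) := by
    intro s hs
    exact ((hx' s hs.1).continuousAt).continuousWithinAt
  have hgeq : x 0 = g 0 := by
    rw [hg]
    simp only [zero_smul, NormedSpace.exp_zero, Matrix.one_mulVec]
  have := ODE_solution_unique (v := fun _ y => M.mulVec y) hv hcont
    (fun s hs => ((hx' s hs.1).hasDerivWithinAt))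
    (fun s hs => ((hg' s).continuousAt).continuousWithinAt : ContinuousOn g (Set.Icc 0 t))
    (fun s hs => ((hg' s).hasDerivWithinAt)) hgeq
  exact this (Set.mem_Icc.2 ⟨ht, le_refl t⟩)

lemma exp_smul_M (σ : Fin n → Fin n) (t : ℝ) :
    NormedSpace.exp (t • (Pm σ - 1)) = Real.exp (-t) • NormedSpace.exp (t • Pm σ) := by
  have h1 : t • (Pm σ - 1) = t • Pm σ + (-t) • (1 : Matrix (Fin n) (Fin n) ℝ) := by
    rw [smul_sub, neg_smul, ← sub_eq_add_neg]
  have hcomm : Commute (t • Pm σ) ((-t) • (1 : Matrix (Fin n) (Fin n) ℝ)) :=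
    ((Commute.one_right (Pm σ)).smul_left t).smul_right (-t)
  rw [h1, Matrix.exp_add_of_commute _ _ hcomm]
  have h2 : NormedSpace.exp ((-t) • (1 : Matrix (Fin n) (Fin n) ℝ))
      = Real.exp (-t) • (1 : Matrix (Fin n) (Fin n) ℝ) := by
    have halg : ((-t) • (1 : Matrix (Fin n) (Fin n) ℝ)) = algebraMap ℝ _ (-t) :=
      (Algebra.algebraMap_eq_smul_one (-t)).symm
    have hm := NormedSpace.map_exp (algebraMap ℝ (Matrix (Fin n) (Fin n) ℝ))
      (continuous_algebraMap ℝ _) (-t)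
    rw [← Real.exp_eq_exp_ℝ] at hm
    simp only [Algebra.algebraMap_eq_smul_one] at hm
    exact hm.symm
  rw [h2, mul_smul_comm, mul_one]

lemma exp_tP_apply (σ : Fin n → Fin n) (t : ℝ) (i j : Fin n) :
    NormedSpace.exp (t • Pm σ) i j
      = ∑' k : ℕ, (t ^ k / (k.factorial : ℝ)) * (if σ^[k] j = i then 1 else 0) := by
  let E : Matrix (Fin n) (Fin n) ℝ →ₗ[ℝ] ℝ :=
    { toFun := fun A => A i j, map_add' := fun _ _ => rfl, map_smul' := fun _ _ => rfl }
  let Ec := LinearMap.toContinuousLinearMap E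
  have hsum := NormedSpace.expSeries_summable' (𝕂 := ℝ) (x := t • Pm σ)
  rw [NormedSpace.exp_eq_tsum ℝ]
  show (∑' k : ℕ, ((k.factorial : ℝ)⁻¹ • (t • Pm σ) ^ k)) i j = _
  have happ : (∑' k : ℕ, ((k.factorial : ℝ)⁻¹ • (t • Pm σ) ^ k)) i j
      = ∑' k : ℕ, (((k.factorial : ℝ)⁻¹ • (t • Pm σ) ^ k) i j) :=
    Ec.map_tsum hsum
  rw [happ]
  refine tsum_congr fun k => ?_
  rw [smul_pow]
  simp only [Matrix.smul_apply, Pm_pow_apply σ k i j, smul_eq_mul]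
  by_cases h : σ^[k] j = i <;> simp [h] <;> ring

lemma x_apply_formula (hn : 1 ≤ n) (σ : Fin n → Fin n) (x : ℝ → (Fin n → ℝ))
    (hx : ∀ t : ℝ, 0 ≤ t → ∀ i : Fin n,
      HasDerivAt (fun t => x t i)
        ((∑ j ∈ Finset.univ.filter fun j => σ j = i, x t j) - x t i) t)
    (t : ℝ) (ht : 0 ≤ t) (i : Fin n) :
    x t i = ∑ j : Fin n, (Real.exp (-t) *
        ∑' k : ℕ, (t ^ k / (k.factorial : ℝ)) * (if σ^[k] j = i then 1 else 0)) * x 0 j := by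
  rw [show x t = (NormedSpace.exp (t • (Pm σ - 1))).mulVec (x 0)
    from x_eq_exp hn σ x hx t ht]
  rw [exp_smul_M, Matrix.smul_mulVec, Pi.smul_apply, smul_eq_mul,
    Matrix.mulVec, dotProduct, Finset.mul_sum]
  refine Finset.sum_congr rfl fun j _ => ?_
  rw [exp_tP_apply]
  ring

end MatrixPart

lemma iterate_ev_periodic {n : ℕ} (σ : Fin n → Fin n) (j : Fin n) :
    ∃ K L : ℕ, 1 ≤ L ∧ ∀ k, K ≤ k → σ^[k + L] j = σ^[k] j := by
  obtain ⟨a, b, hab, heq⟩ := Finite.exists_ne_map_eq_of_infinite (fun k : ℕ => σ^[k] j)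
  have heq : σ^[a] j = σ^[b] j := heq
  rcases Nat.lt_or_ge a b with h | h
  · refine ⟨a, b - a, by omega, fun k hk => ?_⟩
    have h1 : k + (b - a) = (k - a) + b := by omega
    have h2 : k = (k - a) + a := by omega
    rw [h1, Function.iterate_add_apply, ← heq, ← Function.iterate_add_apply, ← h2]
  · have hba : b < a := by omega
    refine ⟨b, a - b, by omega, fun k hk => ?_⟩
    have h1 : k + (a - b) = (k - b) + a := by omega
    have h2 : k = (k - b) + b := by omega
    rw [h1, Function.iterate_add_apply, heq, ← Function.iterate_add_apply, ← h2]

/-- Deterministic unimolecular large-population protocols compute only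
rationals: for the functional-graph flow `x_i' = (∑_{j : σ j = i} x_j) − x_i`
with rational initial data, every coordinate converges to a rational limit. -/
theorem stmt_5 (n : ℕ) (hn : 1 ≤ n) (σ : Fin n → Fin n)
    (x : ℝ → (Fin n → ℝ))
    (hx : ∀ t : ℝ, 0 ≤ t → ∀ i : Fin n,
      HasDerivAt (fun t => x t i)
        ((∑ j ∈ Finset.univ.filter fun j => σ j = i, x t j) - x t i) t)
    (hx0 : ∀ i : Fin n, ∃ r : ℚ, x 0 i = (r : ℝ)) :
    ∀ i : Fin n, ∃ L : ℚ, Tendsto (fun t => x t i) atTop (nhds (L : ℝ)) := by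
  intro i
  choose rat hrat using hx0
  have hlim : ∀ j : Fin n, ∃ q : ℚ, Tendsto (fun t : ℝ => Real.exp (-t) *
      ∑' k : ℕ, (t ^ k / (k.factorial : ℝ)) * (if σ^[k] j = i then 1 else 0)) atTop
      (nhds (q : ℝ)) := by
    intro j
    obtain ⟨K, L, hL, hper⟩ := iterate_ev_periodic σ j
    have h := poisson_ev_real L K hL (fun k => if σ^[k] j = i then (1:ℝ) else 0)
      (fun k hk => by simp only [hper k hk])
    have hcast : ((∑ s ∈ Finset.range L, (if σ^[K * L + s] j = i then (1:ℝ) else 0)) / L)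
        = (((((Finset.range L).filter (fun s => σ^[K * L + s] j = i)).card : ℚ) / L : ℚ) : ℝ) := by
      rw [Finset.sum_boole]
      push_cast
      ring
    rw [hcast] at h
    exact ⟨_, h⟩
  choose q hq using hlim
  refine ⟨∑ j : Fin n, q j * rat j, ?_⟩
  have hev : (fun t => x t i) =ᶠ[atTop] fun t => ∑ j : Fin n, (Real.exp (-t) *
      ∑' k : ℕ, (t ^ k / (k.factorial : ℝ)) * (if σ^[k] j = i then 1 else 0)) * x 0 j := by
    filter_upwards [eventually_ge_atTop (0:ℝ)] with t ht
    exact x_apply_formula hn σ x hx t ht i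
  have hmain : Tendsto (fun t => ∑ j : Fin n, (Real.exp (-t) *
      ∑' k : ℕ, (t ^ k / (k.factorial : ℝ)) * (if σ^[k] j = i then 1 else 0)) * x 0 j) atTop
      (nhds (∑ j : Fin n, (q j : ℝ) * x 0 j)) :=
    tendsto_finset_sum _ fun j _ => (hq j).mul_const _
  rw [show (((∑ j : Fin n, q j * rat j : ℚ)) : ℝ) = ∑ j : Fin n, (q j : ℝ) * x 0 j by
    push_cast
    exact Finset.sum_congr rfl fun j _ => by rw [hrat j]]
  exact Tendsto.congr' hev.symm hmain
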